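/- (Fatou–Radó) Let n ≥ 1 and let f : 𝔻 → 𝔻 be an analytic function that is surjective onto 𝔻 and has constant valence n, i.e., for every w ∈ 𝔻 the equation f(z) = w has exactly n solutions in 𝔻 counted with multiplicity. Then f is a finite Blaschke product of degree n: there exist α ∈ ℝ and z_1,…,z_n ∈ 𝔻 such that f(z) = e^{iα} ∏_{k=1}^n (z_k − z)/(1 − conj(z_k)·z) for all z ∈ 𝔻. -/

import Mathlib

open Complex ComplexConjugate Filter
open Metric Set

/-- `f` takes the value `w` on the open unit disk exactly `n` times, counted with
multiplicity: there is a multiset `s` of cardinality `n`, contained in `𝔻`, whose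
underlying set is the solution set of `f z = w` in `𝔻`, and such that the multiplicity
of each solution `z₀` in `s` is the order of vanishing of `f − w` at `z₀`. -/
def ValenceEq (f : ℂ → ℂ) (w : ℂ) (n : ℕ) : Prop :=
  ∃ s : Multiset ℂ, s.card = n ∧ (∀ z ∈ s, ‖z‖ < 1) ∧
    (∀ z : ℂ, ‖z‖ < 1 → (f z = w ↔ z ∈ s)) ∧
    ∀ z₀ ∈ s, ∃ g : ℂ → ℂ, AnalyticAt ℂ g z₀ ∧ g z₀ ≠ 0 ∧
      ∀ᶠ ζ in nhds z₀, f ζ - w = (ζ - z₀) ^ (Multiset.count z₀ s) * g ζ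



noncomputable def Complex.abs : AbsoluteValue ℂ ℝ := NormedField.toAbsoluteValue ℂ

lemma Complex.abs_apply' (z : ℂ) : Complex.abs z = ‖z‖ := rfl

lemma Complex.norm_eq_abs (z : ℂ) : ‖z‖ = Complex.abs z := rfl

lemma Complex.abs_conj (z : ℂ) : Complex.abs (conj z) = Complex.abs z := by
  simp [Complex.abs_apply']

lemma Complex.sq_abs (z : ℂ) : Complex.abs z ^ 2 = Complex.normSq z := Complex.sq_norm z

lemma Complex.abs_exp (z : ℂ) : Complex.abs (Complex.exp z) = Real.exp z.re := Complex.norm_exp z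

lemma Complex.abs_mul_exp_arg_mul_I (x : ℂ) :
    ((Complex.abs x : ℝ) : ℂ) * Complex.exp (x.arg * Complex.I) = x :=
  Complex.norm_mul_exp_arg_mul_I x

noncomputable def blFR (a z : ℂ) : ℂ := (a - z) / (1 - conj a * z)

noncomputable def blpFR (s : Multiset ℂ) (z : ℂ) : ℂ := (s.map (fun a => blFR a z)).prod

lemma normSq_identity (a z : ℂ) :
    Complex.normSq (1 - conj a * z) - Complex.normSq (a - z)
      = (1 - Complex.normSq a) * (1 - Complex.normSq z) := by
  simp only [Complex.normSq_apply, Complex.sub_re, Complex.sub_im, Complex.one_re,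
    Complex.one_im, Complex.mul_re, Complex.mul_im, Complex.conj_re, Complex.conj_im]
  ring

lemma one_sub_conj_ne {a z : ℂ} (ha : Complex.abs a < 1) (hz : Complex.abs z ≤ 1) :
    1 - conj a * z ≠ 0 := by
  intro h
  have h1 : (1 : ℂ) = conj a * z := by linear_combination h
  have : (1 : ℝ) = Complex.abs (conj a * z) := by rw [← h1]; simp
  rw [map_mul, Complex.abs_conj] at this
  nlinarith [Complex.abs.nonneg a, Complex.abs.nonneg z]

lemma abs_bl_le_one {a z : ℂ} (ha : Complex.abs a < 1) (hz : Complex.abs z ≤ 1) :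
    Complex.abs (blFR a z) ≤ 1 := by
  have hne : 1 - conj a * z ≠ 0 := one_sub_conj_ne ha hz
  rw [blFR, map_div₀, div_le_one (by
    have := Complex.abs.nonneg (1 - conj a * z)
    rcases this.lt_or_eq with h | h
    · exact h
    · exact absurd ((Complex.abs.eq_zero).mp h.symm) hne)]
  have h := normSq_identity a z
  have h1 : Complex.normSq a < 1 := by
    rw [← Complex.sq_abs]; nlinarith [Complex.abs.nonneg a]
  have h2 : Complex.normSq z ≤ 1 := by
    rw [← Complex.sq_abs]; nlinarith [Complex.abs.nonneg z]
  have := Complex.sq_abs (1 - conj a * z)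
  have := Complex.sq_abs (a - z)
  nlinarith [Complex.abs.nonneg (1 - conj a * z), Complex.abs.nonneg (a - z)]

lemma abs_blp_le_one {s : Multiset ℂ} (hs : ∀ a ∈ s, Complex.abs a < 1) {z : ℂ}
    (hz : Complex.abs z ≤ 1) : Complex.abs (blpFR s z) ≤ 1 := by
  rw [blpFR]
  induction s using Multiset.induction_on with
  | empty => simp
  | cons a t ih =>
    rw [Multiset.map_cons, Multiset.prod_cons, map_mul]
    have h1 := abs_bl_le_one (hs a (Multiset.mem_cons_self a t)) hz
    have h2 := ih (fun b hb => hs b (Multiset.mem_cons_of_mem hb))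
    nlinarith [Complex.abs.nonneg (blFR a z), Complex.abs.nonneg ((t.map (fun a => blFR a z)).prod)]

noncomputable def mFR (a : ℂ) (r : ℝ) : ℝ :=
  Real.sqrt (1 - (1 - Complex.normSq a) * (1 - r ^ 2) / (1 - Complex.abs a * r) ^ 2)

lemma mFR_le_abs_bl {a z : ℂ} {r : ℝ} (ha : Complex.abs a < 1) (hr : r < 1)
    (hz : Complex.abs z = r) : mFR a r ≤ Complex.abs (blFR a z) := by
  have hr0 : 0 ≤ r := hz ▸ Complex.abs.nonneg z
  have har : Complex.abs a * r < 1 := by nlinarith [Complex.abs.nonneg a]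
  have hden : (0:ℝ) < 1 - Complex.abs a * r := by linarith
  have hne : 1 - conj a * z ≠ 0 := one_sub_conj_ne ha (le_of_lt (hz ▸ hr))
  have habs : 1 - Complex.abs a * r ≤ Complex.abs (1 - conj a * z) := by
    have h1 : Complex.abs (conj a * z) = Complex.abs a * r := by
      rw [map_mul, Complex.abs_conj, hz]
    calc 1 - Complex.abs a * r = Complex.abs 1 - Complex.abs (conj a * z) := by
          rw [h1]; simp
      _ ≤ Complex.abs (1 - conj a * z) := Complex.abs.le_sub 1 (conj a * z)
  rw [mFR]
  have hblnn : 0 ≤ Complex.abs (blFR a z) := Complex.abs.nonneg _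
  have key : 1 - (1 - Complex.normSq a) * (1 - r ^ 2) / (1 - Complex.abs a * r) ^ 2
      ≤ (Complex.abs (blFR a z)) ^ 2 := by
    have hbl2 : (Complex.abs (blFR a z)) ^ 2
        = Complex.normSq (a - z) / Complex.normSq (1 - conj a * z) := by
      rw [blFR, map_div₀, div_pow, Complex.sq_abs, Complex.sq_abs]
    rw [hbl2]
    have hid := normSq_identity a z
    have hnsz : Complex.normSq z = r ^ 2 := by rw [← Complex.sq_abs, hz]
    have hpos : (0:ℝ) < Complex.normSq (1 - conj a * z) := by
      rw [Complex.normSq_pos]; exact hne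
    have hnn : (0:ℝ) ≤ (1 - Complex.normSq a) * (1 - r ^ 2) := by
      have : Complex.normSq a < 1 := by rw [← Complex.sq_abs]; nlinarith [Complex.abs.nonneg a]
      nlinarith [mul_nonneg (sub_nonneg.mpr hr.le) (by linarith : (0:ℝ) ≤ 1 + r)]
    have hge : (1 - Complex.abs a * r) ^ 2 ≤ Complex.normSq (1 - conj a * z) := by
      rw [← Complex.sq_abs]; nlinarith
    have h1 : (1 - Complex.normSq a) * (1 - r ^ 2) / Complex.normSq (1 - conj a * z)
        ≤ (1 - Complex.normSq a) * (1 - r ^ 2) / (1 - Complex.abs a * r) ^ 2 :=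
      div_le_div_of_nonneg_left hnn (by positivity) hge
    have h2 : Complex.normSq (a - z) / Complex.normSq (1 - conj a * z)
        = 1 - (1 - Complex.normSq a) * (1 - r ^ 2) / Complex.normSq (1 - conj a * z) := by
      rw [eq_sub_iff_add_eq, ← add_div, div_eq_one_iff_eq hpos.ne']
      linear_combination (-1 : ℝ) * hid + (1 - Complex.normSq a) * hnsz
    rw [h2]; linarith
  calc Real.sqrt (1 - (1 - Complex.normSq a) * (1 - r ^ 2) / (1 - Complex.abs a * r) ^ 2)
      ≤ Real.sqrt ((Complex.abs (blFR a z)) ^ 2) := Real.sqrt_le_sqrt key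
    _ = Complex.abs (blFR a z) := by rw [Real.sqrt_sq hblnn]

lemma mFR_tendsto {a : ℂ} (ha : Complex.abs a < 1) :
    Tendsto (mFR a) (nhdsWithin 1 (Set.Iio 1)) (nhds 1) := by
  have hd : (1 - Complex.abs a * 1) ^ 2 ≠ 0 :=
    pow_ne_zero 2 (ne_of_gt (by nlinarith [Complex.abs.nonneg a] : (0:ℝ) < 1 - Complex.abs a * 1))
  have hc : ContinuousAt (mFR a) 1 := by
    apply Real.continuous_sqrt.continuousAt.comp
    apply ContinuousAt.sub continuousAt_const
    apply ContinuousAt.div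
    · fun_prop
    · fun_prop
    · exact hd
  have hval : mFR a 1 = 1 := by
    rw [mFR]; simp
  have := hc.tendsto
  rw [hval] at this
  exact this.mono_left nhdsWithin_le_nhds

lemma maxmodFR {g : ℂ → ℂ} (hg : DifferentiableOn ℂ g (Metric.ball (0:ℂ) 1))
    {z : ℂ} (hz : Complex.abs z < 1) {bound : ℝ → ℝ} {C : ℝ}
    (hb : ∀ᶠ r in nhdsWithin (1:ℝ) (Set.Iio 1), ∀ ζ : ℂ, Complex.abs ζ = r → Complex.abs (g ζ) ≤ bound r)
    (hlim : Tendsto bound (nhdsWithin (1:ℝ) (Set.Iio 1)) (nhds C)) :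
    Complex.abs (g z) ≤ C := by
  have hev : ∀ᶠ r in nhdsWithin (1:ℝ) (Set.Iio 1), Complex.abs (g z) ≤ bound r := by
    have hmem : Set.Ioo (Complex.abs z) 1 ∈ nhdsWithin (1:ℝ) (Set.Iio 1) :=
      Ioo_mem_nhdsLT_of_mem ⟨hz, le_refl 1⟩
    filter_upwards [hb, hmem] with r hr hrm
    obtain ⟨hr1, hr2⟩ := hrm
    have hr0 : (0:ℝ) < r := lt_of_le_of_lt (Complex.abs.nonneg z) hr1
    have hdc : DiffContOnCl ℂ g (Metric.ball (0:ℂ) r) := by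
      refine ⟨hg.mono (Metric.ball_subset_ball hr2.le), ?_⟩
      rw [closure_ball (0:ℂ) hr0.ne']
      exact (hg.mono (Metric.closedBall_subset_ball hr2)).continuousOn
    have := Complex.norm_le_of_forall_mem_frontier_norm_le (Metric.isBounded_ball
      (x := (0:ℂ)) (r := r)) hdc (C := bound r) ?_ (z := z) ?_
    · exact this
    · intro ζ hζ
      rw [frontier_ball (0:ℂ) hr0.ne'] at hζ
      have : Complex.abs ζ = r := by
        exact (by simpa [Complex.dist_eq, mem_sphere_iff_norm] using hζ : ‖ζ‖ = r)
      exact hr ζ this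
    · rw [closure_ball (0:ℂ) hr0.ne', Metric.mem_closedBall]
      simp only [dist_zero_right, Complex.norm_eq_abs]
      exact hr1.le
  exact ge_of_tendsto hlim hev

lemma blaschke_decomp : ∀ (s : Multiset ℂ), (∀ a ∈ s, Complex.abs a < 1) →
    ∀ (g : ℂ → ℂ), DifferentiableOn ℂ g (Metric.ball (0:ℂ) 1) →
    (∀ z, Complex.abs z < 1 → Complex.abs (g z) ≤ 1) →
    (∀ z, Complex.abs z < 1 → (g z = 0 ↔ z ∈ s)) →
    (∀ a ∈ s, ∃ G : ℂ → ℂ, AnalyticAt ℂ G a ∧ G a ≠ 0 ∧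
      ∀ᶠ ζ in nhds a, g ζ = (ζ - a) ^ (s.count a) * G ζ) →
    ∃ h : ℂ → ℂ, DifferentiableOn ℂ h (Metric.ball (0:ℂ) 1) ∧
      (∀ z, Complex.abs z < 1 → Complex.abs (h z) ≤ 1 ∧ h z ≠ 0) ∧
      ∀ z, Complex.abs z < 1 → g z = blpFR s z * h z := by
  intro s
  induction s using Multiset.induction_on with
  | empty =>
    intro _ g hg hb hz _
    refine ⟨g, hg, fun z hz1 => ⟨hb z hz1, ?_⟩, fun z hz1 => by simp [blpFR]⟩
    intro h0
    exact absurd ((hz z hz1).mp h0) (Multiset.notMem_zero z)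
  | cons a t ih =>
    intro hs g hg hb hz hfac
    have ha1 : Complex.abs a < 1 := hs a (Multiset.mem_cons_self a t)
    have hga : g a = 0 := (hz a ha1).mpr (Multiset.mem_cons_self a t)
    have memball : a ∈ Metric.ball (0:ℂ) 1 := by
      simpa [Metric.mem_ball, Complex.dist_eq, Complex.norm_eq_abs] using ha1
    set g₁ : ℂ → ℂ := fun z => (conj a * z - 1) * dslope g a z with hg₁def
    have hg₁d : DifferentiableOn ℂ g₁ (Metric.ball (0:ℂ) 1) := by
      apply DifferentiableOn.mul
      · exact ((differentiable_const (conj a)).mul differentiable_id).sub_const 1 |>.differentiableOn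
      · exact (differentiableOn_dslope (isOpen_ball.mem_nhds memball)).mpr hg
    -- key factorization identity
    have hkey : ∀ z : ℂ, 1 - conj a * z ≠ 0 → g z = blFR a z * g₁ z := by
      intro z hne
      by_cases hza : z = a
      · subst hza
        simp [blFR, hga]
      · rw [hg₁def]
        simp only
        rw [dslope_of_ne g hza, slope_def_field, hga, sub_zero, blFR]
        have hzan : z - a ≠ 0 := sub_ne_zero.mpr hza
        rw [div_mul_eq_mul_div, eq_div_iff hne]
        field_simp
        ring
    -- local factorization at a
    obtain ⟨Ga, hGa_an, hGa_ne, hGev⟩ := hfac a (Multiset.mem_cons_self a t)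
    have hcount : (a ::ₘ t).count a = t.count a + 1 := by
      rw [Multiset.count_cons_self]
    rw [hcount] at hGev
    -- derivative of g at a
    have hderiv : deriv g a = ((t.count a + 1 : ℕ) : ℂ) * (0:ℂ) ^ (t.count a) * Ga a := by
      have h1 : HasDerivAt (fun ζ : ℂ => (ζ - a) ^ (t.count a + 1))
          (((t.count a + 1 : ℕ) : ℂ) * (a - a) ^ (t.count a)) a := by
        have := ((hasDerivAt_id a).sub_const a).fun_pow (t.count a + 1)
        simpa using this
      have h2 := h1.fun_mul hGa_an.differentiableAt.hasDerivAt
      have h3 : deriv g a = deriv (fun ζ => (ζ - a) ^ (t.count a + 1) * Ga ζ) a :=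
        Filter.EventuallyEq.deriv_eq hGev
      rw [h3, h2.deriv]
      simp [sub_self]
    have hd0 : a ∈ t → deriv g a = 0 := by
      intro hat
      rw [hderiv, zero_pow (Multiset.count_pos.mpr hat).ne']
      ring
    have hd1 : a ∉ t → deriv g a = Ga a := by
      intro hat
      rw [hderiv, Multiset.count_eq_zero.mpr hat]
      simp
    have hfactor_ne : conj a * a - 1 ≠ 0 := by
      have := one_sub_conj_ne ha1 ha1.le
      intro h0
      apply this
      linear_combination -h0
    -- zeros of g₁
    have hz₁ : ∀ z, Complex.abs z < 1 → (g₁ z = 0 ↔ z ∈ t) := by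
      intro z hz1
      by_cases hza : z = a
      · subst hza
        rw [hg₁def]
        simp only [dslope_same]
        rw [mul_eq_zero]
        constructor
        · rintro (h0 | h0)
          · exact absurd h0 hfactor_ne
          · by_contra hat
            exact hGa_ne (hd1 hat ▸ h0)
        · intro hat
          exact Or.inr (hd0 hat)
      · have hne : 1 - conj a * z ≠ 0 := one_sub_conj_ne ha1 hz1.le
        have hbl : blFR a z ≠ 0 :=
          div_ne_zero (sub_ne_zero.mpr fun h => hza (h.symm)) hne
        have hgz := hkey z hne
        constructor
        · intro h0
          have : g z = 0 := by rw [hgz, h0, mul_zero]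
          have := (hz z hz1).mp this
          rcases Multiset.mem_cons.mp this with h | h
          · exact absurd h hza
          · exact h
        · intro hat
          have : g z = 0 := (hz z hz1).mpr (Multiset.mem_cons_of_mem hat)
          rw [hgz] at this
          exact (mul_eq_zero.mp this).resolve_left hbl
    -- bound on g₁ via maximum modulus
    have hb₁ : ∀ z, Complex.abs z < 1 → Complex.abs (g₁ z) ≤ 1 := by
      intro z hz1
      have hlim : Tendsto (fun r => (mFR a r)⁻¹) (nhdsWithin (1:ℝ) (Set.Iio 1)) (nhds 1) := by
        simpa using (mFR_tendsto ha1).inv₀ one_ne_zero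
      apply maxmodFR hg₁d hz1 (bound := fun r => (mFR a r)⁻¹) _ hlim
      have hmem : Set.Ioo (Complex.abs a) 1 ∈ nhdsWithin (1:ℝ) (Set.Iio 1) :=
        Ioo_mem_nhdsLT_of_mem ⟨ha1, le_refl 1⟩
      filter_upwards [hmem, (mFR_tendsto ha1).eventually (eventually_gt_nhds zero_lt_one)]
        with r hr hm0 ζ hζ
      have hζ1 : Complex.abs ζ < 1 := hζ ▸ hr.2
      have hne : 1 - conj a * ζ ≠ 0 := one_sub_conj_ne ha1 hζ1.le
      have hml := mFR_le_abs_bl ha1 hr.2 hζ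
      have h2 : mFR a r * Complex.abs (g₁ ζ) ≤ 1 := by
        calc mFR a r * Complex.abs (g₁ ζ) ≤ Complex.abs (blFR a ζ) * Complex.abs (g₁ ζ) :=
              mul_le_mul_of_nonneg_right hml (Complex.abs.nonneg _)
          _ = Complex.abs (g ζ) := by rw [← map_mul, ← hkey ζ hne]
          _ ≤ 1 := hb ζ hζ1
      rw [← one_div, le_div_iff₀ hm0]
      linarith [h2, mul_comm (mFR a r) (Complex.abs (g₁ ζ))]
    -- local factorizations for g₁ on t
    have hfac₁ : ∀ b ∈ t, ∃ G : ℂ → ℂ, AnalyticAt ℂ G b ∧ G b ≠ 0 ∧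
        ∀ᶠ ζ in nhds b, g₁ ζ = (ζ - b) ^ (t.count b) * G ζ := by
      intro b hbt
      by_cases hba : b = a
      · subst hba
        refine ⟨fun ζ => (conj b * ζ - 1) * Ga ζ, ?_, mul_ne_zero hfactor_ne hGa_ne, ?_⟩
        · exact ((analyticAt_const.mul analyticAt_id).sub analyticAt_const).mul hGa_an
        · have hstep : ∀ᶠ ζ in nhds b, ζ ≠ b →
              g₁ ζ = (ζ - b) ^ (t.count b) * ((conj b * ζ - 1) * Ga ζ) := by
            filter_upwards [hGev] with ζ hζ hne
            rw [hg₁def]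
            simp only
            rw [dslope_of_ne g hne, slope_def_field, hga, sub_zero, hζ]
            have hzb : ζ - b ≠ 0 := sub_ne_zero.mpr hne
            rw [pow_succ]
            field_simp
          filter_upwards [hstep] with ζ h
          by_cases hζb : ζ = b
          · subst hζb
            rw [hg₁def]
            simp only [dslope_same]
            rw [hd0 hbt, mul_zero, sub_self,
              zero_pow (Multiset.count_pos.mpr hbt).ne', zero_mul]
          · exact h hζb
      · obtain ⟨Gb, hGb_an, hGb_ne, hGbev⟩ := hfac b (Multiset.mem_cons_of_mem hbt)
        rw [Multiset.count_cons_of_ne hba] at hGbev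
        have hb1 : Complex.abs b < 1 := hs b (Multiset.mem_cons_of_mem hbt)
        have hne_b : 1 - conj a * b ≠ 0 := one_sub_conj_ne ha1 hb1.le
        have hab : a - b ≠ 0 := sub_ne_zero.mpr fun h => hba (h.symm)
        refine ⟨fun ζ => Gb ζ * ((1 - conj a * ζ) / (a - ζ)), ?_, ?_, ?_⟩
        · refine hGb_an.mul (AnalyticAt.div ?_ ?_ hab)
          · exact analyticAt_const.sub (analyticAt_const.mul analyticAt_id)
          · exact analyticAt_const.sub analyticAt_id
        · exact mul_ne_zero hGb_ne (div_ne_zero hne_b hab)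
        · have hev_ne : ∀ᶠ ζ in nhds b, ζ ≠ a := eventually_ne_nhds hba
          have hev_d : ∀ᶠ ζ in nhds b, 1 - conj a * ζ ≠ 0 := by
            have hc : ContinuousAt (fun ζ : ℂ => 1 - conj a * ζ) b := by fun_prop
            exact hc.eventually_ne hne_b
          filter_upwards [hGbev, hev_ne, hev_d] with ζ hζ hζa hζd
          have haζ : a - ζ ≠ 0 := sub_ne_zero.mpr fun h => hζa (h.symm)
          have hbl : blFR a ζ ≠ 0 := div_ne_zero haζ hζd
          apply mul_left_cancel₀ hbl
          rw [← hkey ζ hζd, hζ, blFR]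
          rw [div_mul_eq_mul_div, eq_div_iff hζd]
          field_simp
    obtain ⟨h, hhd, hhprops, hheq⟩ := ih (fun b hb' => hs b (Multiset.mem_cons_of_mem hb'))
      g₁ hg₁d hb₁ hz₁ hfac₁
    refine ⟨h, hhd, hhprops, ?_⟩
    intro z hz1
    have hne : 1 - conj a * z ≠ 0 := one_sub_conj_ne ha1 hz1.le
    rw [hkey z hne, hheq z hz1, blpFR, blpFR, Multiset.map_cons, Multiset.prod_cons]
    ring

lemma local_mult {f : ℂ → ℂ} {w a : ℂ} {m : ℕ} (hm : 0 < m) {G : ℂ → ℂ}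
    (hG : AnalyticAt ℂ G a) (hGa : G a ≠ 0)
    (hfac : ∀ᶠ ζ in nhds a, f ζ - w = (ζ - a) ^ m * G ζ) {δ : ℝ} (hδ : 0 < δ) :
    ∃ ε > 0, ∀ c : ℂ, c ≠ w → Complex.abs (c - w) < ε →
      ∃ T : Finset ℂ, T.card = m ∧ ∀ ζ ∈ T, Complex.abs (ζ - a) < δ ∧ f ζ = c := by
  obtain ⟨b, hb⟩ := IsAlgClosed.exists_pow_nat_eq (G a) hm
  have hbne : b ≠ 0 := by
    intro h0
    rw [h0, zero_pow hm.ne'] at hb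
    exact hGa hb.symm
  set H : ℂ → ℂ := fun ζ => b * Complex.exp (Complex.log (G ζ / G a) / m) with hHdef
  have hH_an : AnalyticAt ℂ H a := by
    apply analyticAt_const.mul
    apply AnalyticAt.cexp
    apply AnalyticAt.div _ analyticAt_const (Nat.cast_ne_zero.mpr hm.ne')
    · apply (analyticAt_clog _).comp (hG.div analyticAt_const hGa)
      simp only [Pi.div_apply, div_self hGa]
      exact Complex.one_mem_slitPlane
  have hHne : ∀ ζ, H ζ ≠ 0 := fun ζ => mul_ne_zero hbne (Complex.exp_ne_zero _)
  have hHm : ∀ᶠ ζ in nhds a, H ζ ^ m = G ζ := by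
    have hGne : ∀ᶠ ζ in nhds a, G ζ ≠ 0 := hG.continuousAt.eventually_ne hGa
    filter_upwards [hGne] with ζ hζ
    rw [hHdef]
    simp only
    rw [mul_pow, hb, ← Complex.exp_nat_mul]
    rw [mul_div_cancel₀ _ (Nat.cast_ne_zero.mpr hm.ne' : ((m:ℕ):ℂ) ≠ 0)]
    rw [Complex.exp_log (div_ne_zero hζ hGa)]
    field_simp
  set ψ : ℂ → ℂ := fun ζ => (ζ - a) * H ζ with hψdef
  have hψ_an : AnalyticAt ℂ ψ a := (analyticAt_id.sub analyticAt_const).mul hH_an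
  have hψa : ψ a = 0 := by rw [hψdef]; simp
  have hψne : ∀ ζ, ζ ≠ a → ψ ζ ≠ 0 := fun ζ hζ =>
    mul_ne_zero (sub_ne_zero.mpr hζ) (hHne ζ)
  have hψm : ∀ᶠ ζ in nhds a, f ζ - w = ψ ζ ^ m := by
    filter_upwards [hfac, hHm] with ζ h1 h2
    rw [hψdef]
    simp only
    rw [mul_pow, h2, h1]
  rcases hψ_an.eventually_constant_or_nhds_le_map_nhds with hconst | hmap
  · exfalso
    rw [hψa] at hconst
    have h2 : ∀ᶠ ζ in nhdsWithin a {a}ᶜ, ψ ζ = 0 :=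
      hconst.filter_mono nhdsWithin_le_nhds
    obtain ⟨ζ, hζ0, hζne⟩ := (h2.and self_mem_nhdsWithin).exists
    exact hψne ζ hζne hζ0
  · rw [hψa] at hmap
    have hS : {ζ : ℂ | Complex.abs (ζ - a) < δ ∧ f ζ - w = ψ ζ ^ m} ∈ nhds a := by
      apply Filter.inter_mem _ hψm
      have : Metric.ball a δ ∈ nhds a := Metric.ball_mem_nhds a hδ
      convert this using 1
      simp only [Metric.ball, Complex.dist_eq, Complex.norm_eq_abs]
      exact Iff.rfl
    have himg : ψ '' {ζ : ℂ | Complex.abs (ζ - a) < δ ∧ f ζ - w = ψ ζ ^ m} ∈ nhds (0:ℂ) :=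
      hmap (Filter.image_mem_map hS)
    obtain ⟨ε', hε', hball⟩ := Metric.mem_nhds_iff.mp himg
    refine ⟨ε' ^ m, pow_pos hε' m, ?_⟩
    intro c hcw hcε
    obtain ⟨b₀, hb₀⟩ := IsAlgClosed.exists_pow_nat_eq (c - w) hm
    have hb₀ne : b₀ ≠ 0 := by
      intro h0
      rw [h0, zero_pow hm.ne'] at hb₀
      exact hcw (by linear_combination -hb₀)
    have hb₀small : Complex.abs b₀ < ε' := by
      have h1 : Complex.abs b₀ ^ m < ε' ^ m := by
        rw [← map_pow, hb₀]; exact hcε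
      exact lt_of_pow_lt_pow_left₀ m hε'.le h1
    set ξ : ℂ := Complex.exp (2 * Real.pi * Complex.I / m) with hξdef
    have hprim : IsPrimitiveRoot ξ m := Complex.isPrimitiveRoot_exp m hm.ne'
    have hξabs : Complex.abs ξ = 1 := by
      rw [hξdef, Complex.abs_exp]
      norm_num [Complex.div_re, Complex.mul_I_re]
    have hηmem : ∀ i : Fin m, ∃ ζ, (Complex.abs (ζ - a) < δ ∧ f ζ - w = ψ ζ ^ m) ∧
        ψ ζ = b₀ * ξ ^ (i : ℕ) := by
      intro i
      have : b₀ * ξ ^ (i : ℕ) ∈ Metric.ball (0:ℂ) ε' := by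
        rw [Metric.mem_ball, Complex.dist_eq, sub_zero, Complex.norm_eq_abs, map_mul, map_pow, hξabs, one_pow,
          mul_one]
        exact hb₀small
      obtain ⟨ζ, hζS, hζψ⟩ := hball this
      exact ⟨ζ, hζS, hζψ⟩
    choose ζf hζS hζψ using hηmem
    have hinj : Function.Injective ζf := by
      intro i j hij
      have : b₀ * ξ ^ (i : ℕ) = b₀ * ξ ^ (j : ℕ) := by rw [← hζψ i, ← hζψ j, hij]
      have hpow : ξ ^ (i : ℕ) = ξ ^ (j : ℕ) := mul_left_cancel₀ hb₀ne this
      exact Fin.ext (hprim.pow_inj i.isLt j.isLt hpow)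
    refine ⟨Finset.image ζf Finset.univ, ?_, ?_⟩
    · rw [Finset.card_image_of_injective _ hinj, Finset.card_univ, Fintype.card_fin]
    · intro ζ hζ
      obtain ⟨i, _, rfl⟩ := Finset.mem_image.mp hζ
      refine ⟨(hζS i).1, ?_⟩
      have h1 : f (ζf i) - w = ψ (ζf i) ^ m := (hζS i).2
      rw [hζψ i] at h1
      have h2 : (b₀ * ξ ^ (i:ℕ)) ^ m = c - w := by
        rw [mul_pow, ← pow_mul, mul_comm (i:ℕ) m, pow_mul, hprim.pow_eq_one, one_pow, mul_one,
          hb₀]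
      rw [h2] at h1
      linear_combination h1



lemma exists_sepFR (F : Finset ℂ) :
    ∃ δ : ℝ, 0 < δ ∧ ∀ a ∈ F, ∀ b ∈ F, a ≠ b → 2 * δ ≤ dist a b := by
  by_cases hP : F.offDiag.Nonempty
  · set Q := F.offDiag.image (fun p => dist p.1 p.2) with hQdef
    have hQ : Q.Nonempty := hP.image _
    refine ⟨Q.min' hQ / 2, ?_, ?_⟩
    · have hpos : ∀ q ∈ Q, 0 < q := by
        intro q hq
        obtain ⟨p, hp, rfl⟩ := Finset.mem_image.mp hq
        exact dist_pos.mpr (Finset.mem_offDiag.mp hp).2.2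
      have := hpos _ (Q.min'_mem hQ)
      linarith
    · intro a ha b hb hab
      have hmem : dist a b ∈ Q :=
        Finset.mem_image.mpr ⟨(a, b), Finset.mem_offDiag.mpr ⟨ha, hb, hab⟩, rfl⟩
      have := Q.min'_le _ hmem
      linarith
  · refine ⟨1, one_pos, fun a ha b hb hab => ?_⟩
    exact absurd ⟨(a, b), Finset.mem_offDiag.mpr ⟨ha, hb, hab⟩⟩ hP

lemma properFR {n : ℕ} {f : ℂ → ℂ}
    (hmaps : ∀ z : ℂ, Complex.abs z < 1 → Complex.abs (f z) < 1)
    (hval : ∀ w : ℂ, Complex.abs w < 1 → ValenceEq f w n) :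
    ∀ c : ℝ, c < 1 → ∃ r : ℝ, r < 1 ∧
      ∀ z : ℂ, Complex.abs z < 1 → r < Complex.abs z → c < Complex.abs (f z) := by
  intro c hc
  by_contra hcon
  push_neg at hcon
  have hseq : ∀ j : ℕ, ∃ z : ℂ, Complex.abs z < 1 ∧ 1 - 1 / (j + 1) < Complex.abs z ∧
      Complex.abs (f z) ≤ c := by
    intro j
    have h1 : (1 : ℝ) - 1 / (j + 1) < 1 := by
      have : (0:ℝ) < 1 / (j + 1) := by positivity
      linarith
    obtain ⟨z, hz1, hz2, hz3⟩ := hcon _ h1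
    exact ⟨z, hz1, hz2, hz3⟩
  choose zs hz1 hz2 hz3 using hseq
  have hc0 : 0 ≤ c := le_trans (Complex.abs.nonneg _) (hz3 0)
  have hmem : ∀ j, f (zs j) ∈ Metric.closedBall (0:ℂ) c := by
    intro j
    rw [Metric.mem_closedBall, Complex.dist_eq, sub_zero]
    exact hz3 j
  obtain ⟨w, hwK, φ, hφ, hφt⟩ := (isCompact_closedBall (0:ℂ) c).tendsto_subseq hmem
  have hw1 : Complex.abs w < 1 := by
    rw [Metric.mem_closedBall, Complex.dist_eq, sub_zero, Complex.norm_eq_abs] at hwK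
    linarith
  obtain ⟨s, hcard, hsin, hsiff, hsfac⟩ := hval w hw1
  set F := s.toFinset with hFdef
  set F₀ : Finset ℝ := insert (0:ℝ) (F.image Complex.abs) with hF₀def
  have hF₀ne : F₀.Nonempty := ⟨0, Finset.mem_insert_self _ _⟩
  set ρ₀ := F₀.max' hF₀ne with hρ₀def
  have hρ₀0 : (0:ℝ) ≤ ρ₀ := Finset.le_max' _ _ (Finset.mem_insert_self _ _)
  have hρ₀1 : ρ₀ < 1 := by
    rw [hρ₀def, Finset.max'_lt_iff]
    intro y hy
    rcases Finset.mem_insert.mp hy with rfl | hy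
    · exact one_pos
    · obtain ⟨x, hx, rfl⟩ := Finset.mem_image.mp hy
      exact hsin x (Multiset.mem_toFinset.mp hx)
  have hbnd : ∀ x ∈ s, Complex.abs x ≤ ρ₀ := by
    intro x hx
    apply Finset.le_max'
    exact Finset.mem_insert_of_mem (Finset.mem_image.mpr ⟨x, Multiset.mem_toFinset.mpr hx, rfl⟩)
  obtain ⟨δ₀, hδ₀, hsep⟩ := exists_sepFR F
  set δ := min δ₀ ((1 - ρ₀) / 2) with hδdef
  have hδpos : 0 < δ := lt_min hδ₀ (by linarith)
  set ρ' := (1 + ρ₀) / 2 with hρ'def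
  have hρ'1 : ρ' < 1 := by rw [hρ'def]; linarith
  have hρ₀ρ' : ρ₀ < ρ' := by rw [hρ'def]; linarith
  have hδρ' : ρ₀ + δ ≤ ρ' := by
    have : δ ≤ (1 - ρ₀) / 2 := min_le_right _ _
    rw [hρ'def]; linarith
  have hloc : ∀ a : ℂ, ∃ ε : ℝ, 0 < ε ∧ (a ∈ F → ∀ c' : ℂ, c' ≠ w →
      Complex.abs (c' - w) < ε → ∃ T : Finset ℂ, T.card = s.count a ∧
        ∀ ζ ∈ T, Complex.abs (ζ - a) < δ ∧ f ζ = c') := by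
    intro a
    by_cases haF : a ∈ F
    · have ham := Multiset.mem_toFinset.mp haF
      obtain ⟨G, hG, hGne, hGev⟩ := hsfac a ham
      obtain ⟨ε, hε, hspec⟩ :=
        local_mult (Multiset.count_pos.mpr ham) hG hGne hGev hδpos
      exact ⟨ε, hε, fun _ => hspec⟩
    · exact ⟨1, one_pos, fun h => absurd h haF⟩
  choose εf hεpos hεspec using hloc
  set E : Finset ℝ := insert (1:ℝ) (F.image εf) with hEdef
  have hEne : E.Nonempty := ⟨1, Finset.mem_insert_self _ _⟩
  set ε := E.min' hEne with hεdef
  have hε : 0 < ε := by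
    rw [hεdef, Finset.lt_min'_iff]
    intro y hy
    rcases Finset.mem_insert.mp hy with rfl | hy
    · exact one_pos
    · obtain ⟨x, _, rfl⟩ := Finset.mem_image.mp hy
      exact hεpos x
  have hεle : ∀ a ∈ F, ε ≤ εf a := fun a ha =>
    Finset.min'_le _ _ (Finset.mem_insert_of_mem (Finset.mem_image.mpr ⟨a, ha, rfl⟩))
  obtain ⟨J₁, hJ₁⟩ := exists_nat_one_div_lt (by linarith : (0:ℝ) < 1 - ρ')
  obtain ⟨j₀, hj₀⟩ := (Metric.tendsto_atTop.mp hφt) ε hε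
  set j := max j₀ J₁ with hjdef
  set u := zs (φ j) with hudef
  set wj := f u with hwjdef
  have hu1 : Complex.abs u < 1 := hz1 _
  have hu_big : ρ' < Complex.abs u := by
    have h1 : 1 - 1 / ((φ j : ℝ) + 1) < Complex.abs u := hz2 _
    have h2 : (j : ℝ) ≤ (φ j : ℝ) := by exact_mod_cast hφ.le_apply
    have h3 : (J₁ : ℝ) ≤ (j : ℝ) := by exact_mod_cast le_max_right j₀ J₁
    have h4 : 1 / ((φ j : ℝ) + 1) ≤ 1 / ((J₁ : ℝ) + 1) := by
      apply one_div_le_one_div_of_le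
      · positivity
      · linarith
    linarith
  have hdist : dist wj w < ε := hj₀ j (le_max_left _ _)
  by_cases hwj : wj = w
  · have : u ∈ s := (hsiff u hu1).mp hwj
    have := hbnd u this
    linarith
  · have hwj1 : Complex.abs wj < 1 := hmaps u hu1
    obtain ⟨s', hcard', hsin', hsiff', _⟩ := hval wj hwj1
    have hTa : ∀ a : ℂ, ∃ T : Finset ℂ, a ∈ F → (T.card = s.count a ∧
        ∀ ζ ∈ T, Complex.abs (ζ - a) < δ ∧ f ζ = wj) := by
      intro a
      by_cases haF : a ∈ F
      · obtain ⟨T, hT1, hT2⟩ := hεspec a haF wj hwj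
          (by rw [← Complex.norm_eq_abs, ← Complex.dist_eq]; exact lt_of_lt_of_le hdist (hεle a haF))
        exact ⟨T, fun _ => ⟨hT1, hT2⟩⟩
      · exact ⟨∅, fun h => absurd h haF⟩
    choose Tf hTf using hTa
    set TT := F.biUnion Tf with hTTdef
    have hdisj : ∀ a ∈ F, ∀ b ∈ F, a ≠ b → Disjoint (Tf a) (Tf b) := by
      intro a ha b hb hab
      rw [Finset.disjoint_left]
      intro ζ hζa hζb
      have h1 := ((hTf a ha).2 ζ hζa).1
      have h2 := ((hTf b hb).2 ζ hζb).1
      have h3 := hsep a ha b hb hab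
      have h4 : dist a b ≤ dist a ζ + dist ζ b := dist_triangle a ζ b
      rw [Complex.dist_eq, Complex.norm_eq_abs] at h3
      rw [Complex.dist_eq, Complex.dist_eq, Complex.dist_eq, Complex.norm_eq_abs,
        Complex.norm_eq_abs, Complex.norm_eq_abs] at h4
      have h5 : Complex.abs (a - ζ) = Complex.abs (ζ - a) := Complex.abs.map_sub a ζ
      have h6 : δ ≤ δ₀ := min_le_left _ _
      rw [h5] at h4
      linarith
    have hTTcard : TT.card = n := by
      have hsum : ∑ a ∈ F, (Tf a).card = ∑ a ∈ F, s.count a :=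
        Finset.sum_congr rfl (fun a ha => (hTf a ha).1)
      rw [hTTdef, Finset.card_biUnion hdisj, hsum, hFdef, Multiset.toFinset_sum_count_eq, hcard]
    have hTTel : ∀ ζ ∈ TT, Complex.abs ζ ≤ ρ' ∧ ζ ∈ s' := by
      intro ζ hζ
      obtain ⟨a, haF, hζa⟩ := Finset.mem_biUnion.mp hζ
      obtain ⟨hd, hfζ⟩ := (hTf a haF).2 ζ hζa
      have hab : Complex.abs a ≤ ρ₀ := hbnd a (Multiset.mem_toFinset.mp haF)
      have habs : Complex.abs ζ ≤ ρ₀ + δ := by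
        have := Complex.abs.sub_le ζ a 0
        simp only [sub_zero] at this
        linarith
      have hζρ' : Complex.abs ζ ≤ ρ' := le_trans habs hδρ'
      have hζ1 : Complex.abs ζ < 1 := lt_of_le_of_lt hζρ' hρ'1
      exact ⟨hζρ', (hsiff' ζ hζ1).mp hfζ⟩
    have huTT : u ∉ TT := fun h => absurd ((hTTel u h).1) (not_le.mpr hu_big)
    have hsub : insert u TT ⊆ s'.toFinset := by
      intro ζ hζ
      rcases Finset.mem_insert.mp hζ with rfl | hζ
      · exact Multiset.mem_toFinset.mpr ((hsiff' u hu1).mp rfl)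
      · exact Multiset.mem_toFinset.mpr (hTTel ζ hζ).2
    have hfin : n + 1 ≤ n := by
      calc n + 1 = (insert u TT).card := by
            rw [Finset.card_insert_of_notMem huTT, hTTcard]
        _ ≤ s'.toFinset.card := Finset.card_le_card hsub
        _ ≤ Multiset.card s' := Multiset.toFinset_card_le s'
        _ = n := hcard'
    omega


/-- **Fatou–Radó.**  Let `n ≥ 1` and let `f : 𝔻 → 𝔻` be analytic, surjective onto `𝔻`,
and of constant valence `n` (each `w ∈ 𝔻` is attained exactly `n` times counted with
multiplicity).  Then `f` is a finite Blaschke product of degree `n`. -/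
theorem fatou_rado_constant_valence (n : ℕ) (hn : 1 ≤ n) (f : ℂ → ℂ)
    (hf : DifferentiableOn ℂ f (Metric.ball (0 : ℂ) 1))
    (hmaps : ∀ z : ℂ, ‖z‖ < 1 → ‖f z‖ < 1)
    (hsurj : ∀ w : ℂ, ‖w‖ < 1 → ∃ z : ℂ, ‖z‖ < 1 ∧ f z = w)
    (hval : ∀ w : ℂ, ‖w‖ < 1 → ValenceEq f w n) :
    ∃ (α : ℝ) (z : Fin n → ℂ), (∀ k, ‖z k‖ < 1) ∧
      ∀ w : ℂ, ‖w‖ < 1 →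
        f w = Complex.exp (α * Complex.I) * ∏ k, (z k - w) / (1 - conj (z k) * w) := by
  obtain ⟨s, hcard, hsin, hsiff, hsfac⟩ := hval 0 (by norm_num)
  have hb : ∀ z, Complex.abs z < 1 → Complex.abs (f z) ≤ 1 := fun z hz => (hmaps z hz).le
  have hfac : ∀ a ∈ s, ∃ G : ℂ → ℂ, AnalyticAt ℂ G a ∧ G a ≠ 0 ∧
      ∀ᶠ ζ in nhds a, f ζ = (ζ - a) ^ (s.count a) * G ζ := by
    intro a ha
    obtain ⟨G, h1, h2, h3⟩ := hsfac a ha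
    exact ⟨G, h1, h2, by simpa using h3⟩
  obtain ⟨h, hhd, hhp, hheq⟩ := blaschke_decomp s hsin f hf hb hsiff hfac
  -- |h| = 1 everywhere on the disk
  have habs1 : ∀ z : ℂ, Complex.abs z < 1 → Complex.abs (h z) = 1 := by
    intro z hz
    have hinvd : DifferentiableOn ℂ (fun z => (h z)⁻¹) (Metric.ball (0:ℂ) 1) := by
      apply hhd.inv
      intro x hx
      rw [Metric.mem_ball, Complex.dist_eq, sub_zero] at hx
      exact (hhp x hx).2
    have hinv : ∀ ε : ℝ, 0 < ε → ε < 1 → Complex.abs ((h z)⁻¹) ≤ (1 - ε)⁻¹ := by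
      intro ε hε hε1
      obtain ⟨r₀, hr₀1, hr₀⟩ := properFR hmaps hval (1 - ε) (by linarith)
      apply maxmodFR hinvd hz (bound := fun _ => (1 - ε)⁻¹) _ tendsto_const_nhds
      have hmem : Set.Ioo r₀ 1 ∈ nhdsWithin (1:ℝ) (Set.Iio 1) :=
        Ioo_mem_nhdsLT_of_mem ⟨hr₀1, le_refl 1⟩
      filter_upwards [hmem] with r hr ζ hζ
      have hζ1 : Complex.abs ζ < 1 := hζ ▸ hr.2
      have hfζ : 1 - ε < Complex.abs (f ζ) := hr₀ ζ hζ1 (hζ ▸ hr.1)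
      have hblp : Complex.abs (blpFR s ζ) ≤ 1 := abs_blp_le_one hsin hζ1.le
      have hfeq : Complex.abs (f ζ) = Complex.abs (blpFR s ζ) * Complex.abs (h ζ) := by
        rw [← map_mul, ← hheq ζ hζ1]
      have hhζ : 1 - ε ≤ Complex.abs (h ζ) := by
        nlinarith [Complex.abs.nonneg (h ζ), Complex.abs.nonneg (blpFR s ζ)]
      rw [map_inv₀]
      exact inv_anti₀ (by linarith) hhζ
    have hpos : 0 < Complex.abs (h z) := by
      rw [Complex.abs.pos_iff]
      exact (hhp z hz).2
    refine le_antisymm ((hhp z hz).1) ?_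
    have h1 : Complex.abs ((h z)⁻¹) ≤ 1 := by
      by_contra hgt
      push_neg at hgt
      set A := Complex.abs ((h z)⁻¹) with hA
      have hA1 : 1 < A := hgt
      have hεlt : (1 : ℝ) - 2 / (1 + A) < 1 := by
        have : 0 < 2 / (1 + A) := by positivity
        linarith
      have hεgt : 0 < (1 : ℝ) - 2 / (1 + A) := by
        rw [sub_pos, div_lt_one (by linarith)]
        linarith
      have := hinv _ hεgt hεlt
      have h2 : (1 - (1 - 2 / (1 + A)))⁻¹ = (1 + A) / 2 := by
        rw [sub_sub_cancel]
        rw [inv_div]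
      rw [h2] at this
      nlinarith
    rw [map_inv₀] at h1
    calc (1:ℝ) = Complex.abs (h z) * (Complex.abs (h z))⁻¹ := (mul_inv_cancel₀ hpos.ne').symm
      _ ≤ Complex.abs (h z) * 1 := mul_le_mul_of_nonneg_left h1 hpos.le
      _ = Complex.abs (h z) := mul_one _
  -- h is constant
  have hconst : ∀ z : ℂ, Complex.abs z < 1 → h z = h 0 := by
    intro z hz
    have h0m : (0:ℂ) ∈ Metric.ball (0:ℂ) 1 := by simp
    have hmax : IsMaxOn (norm ∘ h) (Metric.ball (0:ℂ) 1) 0 := by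
      intro x hx
      rw [Metric.mem_ball, Complex.dist_eq, sub_zero] at hx
      simp only [Set.mem_setOf_eq, Function.comp_apply, Complex.norm_eq_abs]
      rw [habs1 x hx, habs1 0 (by norm_num)]
    have := Complex.eqOn_of_isPreconnected_of_isMaxOn_norm
      (convex_ball (0:ℂ) 1).isPreconnected isOpen_ball hhd h0m hmax
    have hzm : z ∈ Metric.ball (0:ℂ) 1 := by
      rw [Metric.mem_ball, Complex.dist_eq, sub_zero]; exact hz
    exact this hzm
  -- the constant has modulus one
  set c := h 0 with hcdef
  have hc1 : Complex.abs c = 1 := habs1 0 (by norm_num)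
  set α := c.arg with hαdef
  have hcα : Complex.exp (α * Complex.I) = c := by
    have := Complex.abs_mul_exp_arg_mul_I c
    rw [hc1] at this
    simpa using this
  -- produce the tuple from the multiset
  set l := s.toList with hldef
  have hlen : l.length = n := by rw [hldef, Multiset.length_toList, hcard]
  refine ⟨α, fun k => l.get (Fin.cast hlen.symm k), ?_, ?_⟩
  · intro k
    apply hsin
    rw [← Multiset.mem_toList, ← hldef]
    exact l.get_mem _
  · intro w hw
    have hprod : ∏ k : Fin n, (l.get (Fin.cast hlen.symm k) - w) /
        (1 - conj (l.get (Fin.cast hlen.symm k)) * w) = blpFR s w := by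
      rw [blpFR, ← Multiset.coe_toList s, ← hldef, Multiset.map_coe, Multiset.prod_coe]
      rw [← List.ofFn_getElem_eq_map l (fun a => blFR a w)]
      rw [List.prod_ofFn]
      rw [← Fin.prod_congr' _ hlen]
      rfl
    rw [hheq w hw, hconst w hw, hcα, hprod, mul_comm]
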